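/- Let V be a finite-dimensional complex vector space with symmetric nondegenerate bilinear form ⟨·,·⟩ and μ an antisymmetric diagonalizable endomorphism. Suppose R_k ∈ End(V) satisfies [μ, R_k] = k·R_k and ⟨R_k(a), b⟩ + (-1)^k ⟨a, R_k(b)⟩ = 0 for each k ≥ 1, and set R = ∑_k R_k. Then {R(a), b} + {a, R(b)} = 0 for all a, b ∈ V, where {a, b} := ⟨exp(πi μ)a, b⟩. -/

import Mathlib

open Matrix NormedSpace

lemma exp_comm_aux {n : Type*} [Fintype n] [DecidableEq n]
    {A B C : Matrix n n ℂ} (h : A * B = B * C) :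
    exp A * B = B * exp C := by
  letI : SeminormedRing (Matrix n n ℂ) := Matrix.linftyOpSemiNormedRing
  letI : NormedRing (Matrix n n ℂ) := Matrix.linftyOpNormedRing
  letI : NormedAlgebra ℂ (Matrix n n ℂ) := Matrix.linftyOpNormedAlgebra
  have hpow : ∀ k : ℕ, A ^ k * B = B * C ^ k := by
    intro k
    induction k with
    | zero => simp
    | succ k ih =>
      rw [pow_succ, pow_succ, mul_assoc, h, ← mul_assoc, ih, mul_assoc]
  simp only [exp_eq_tsum ℂ]
  erw [← (expSeries_summable' (𝕂 := ℂ) A).tsum_mul_right,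
    ← (expSeries_summable' (𝕂 := ℂ) C).tsum_mul_left]
  congr 1
  ext k
  rw [smul_mul_assoc, mul_smul_comm, hpow]

lemma exp_smul_one_aux {n : Type*} [Fintype n] [DecidableEq n] (c : ℂ) :
    exp (c • (1 : Matrix n n ℂ)) = Complex.exp c • (1 : Matrix n n ℂ) := by
  letI : SeminormedRing (Matrix n n ℂ) := Matrix.linftyOpSemiNormedRing
  letI : NormedRing (Matrix n n ℂ) := Matrix.linftyOpNormedRing
  letI : NormedAlgebra ℂ (Matrix n n ℂ) := Matrix.linftyOpNormedAlgebra
  rw [← Algebra.algebraMap_eq_smul_one, Complex.exp_eq_exp_ℂ, ← Algebra.algebraMap_eq_smul_one]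
  exact (algebraMap_exp_comm c).symm

/-- If μ is antisymmetric (w.r.t. η) and diagonalizable, and R = ∑_{k≥1} R_k with
[μ, R_k] = k R_k and ⟨R_k a, b⟩ + (-1)^k ⟨a, R_k b⟩ = 0, then
{R a, b} + {a, R b} = 0 where {a,b} := ⟨exp(πi μ) a, b⟩; in matrix form
Sᵀ (exp(πiμ))ᵀ η + (exp(πiμ))ᵀ η S = 0 for S = ∑_{k=1}^N R_k. -/
theorem stmt_2 {n : Type*} [Fintype n] [DecidableEq n]
    (η μ : Matrix n n ℂ) (hsymm : ηᵀ = η) (hnd : IsUnit η.det)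
    (hanti : μᵀ * η + η * μ = 0)
    (hdiag : ∃ P : Matrix n n ℂ, ∃ d : n → ℂ,
      IsUnit P.det ∧ μ = P * Matrix.diagonal d * P⁻¹)
    (R : ℕ → Matrix n n ℂ) (N : ℕ)
    (hcomm : ∀ k, 1 ≤ k → μ * R k - R k * μ = (k : ℂ) • R k)
    (hsym : ∀ k, 1 ≤ k → (R k)ᵀ * η + ((-1 : ℂ) ^ k) • (η * R k) = 0)
    (S : Matrix n n ℂ) (hS : S = ∑ k ∈ Finset.Icc 1 N, R k) :
    Sᵀ * (NormedSpace.exp (((Real.pi : ℂ) * Complex.I) • μ))ᵀ * η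
      + (NormedSpace.exp (((Real.pi : ℂ) * Complex.I) • μ))ᵀ * η * S = 0 := by
  set c : ℂ := (Real.pi : ℂ) * Complex.I with hc
  have hμη : μᵀ * η = -(η * μ) := eq_neg_of_add_eq_zero_left hanti
  have hT : (exp (c • μ))ᵀ = exp (c • μᵀ) := by
    rw [← Matrix.exp_transpose, transpose_smul]
  have hEη : (exp (c • μ))ᵀ * η = η * exp ((-c) • μ) := by
    rw [hT]
    apply exp_comm_aux
    rw [smul_mul_assoc, hμη, mul_smul_comm, neg_smul, smul_neg]
  have hFR : ∀ k, 1 ≤ k →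
      exp ((-c) • μ) * R k = ((-1 : ℂ) ^ k) • (R k * exp ((-c) • μ)) := by
    intro k hk
    have h1 : ((-c) • μ) * R k = R k * ((-c) • (μ + (k : ℂ) • 1)) := by
      have hμR : μ * R k = R k * (μ + (k : ℂ) • 1) := by
        have h := hcomm k hk
        rw [sub_eq_iff_eq_add] at h
        rw [mul_add, mul_smul_comm, mul_one, h, add_comm]
      rw [smul_mul_assoc, hμR, mul_smul_comm]
    have h2 : exp ((-c) • (μ + (k : ℂ) • 1))
        = exp ((-c) • μ) * (Complex.exp ((-c) * k) • 1) := by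
      letI : SeminormedRing (Matrix n n ℂ) := Matrix.linftyOpSemiNormedRing
      letI : NormedRing (Matrix n n ℂ) := Matrix.linftyOpNormedRing
      letI : NormedAlgebra ℂ (Matrix n n ℂ) := Matrix.linftyOpNormedAlgebra
      have hcomm' : Commute ((-c) • μ) ((-c) • ((k : ℂ) • (1 : Matrix n n ℂ))) := by
        apply Commute.smul_left
        apply Commute.smul_right
        apply Commute.smul_right
        exact Commute.one_right μ
      rw [smul_add, Matrix.exp_add_of_commute _ _ hcomm', smul_smul, exp_smul_one_aux]
    have hexpc : Complex.exp ((-c) * k) = (-1 : ℂ) ^ k := by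
      have hbase : Complex.exp (-c) = -1 := by
        rw [hc, Complex.exp_neg, Complex.exp_pi_mul_I]
        norm_num
      rw [mul_comm, Complex.exp_nat_mul, hbase]
    rw [exp_comm_aux h1, h2, hexpc, ← mul_assoc, mul_smul_comm, mul_one]
  have hterm : ∀ k ∈ Finset.Icc 1 N,
      (R k)ᵀ * ((exp (c • μ))ᵀ * η) + (exp (c • μ))ᵀ * η * R k = 0 := by
    intro k hk
    have hk1 : 1 ≤ k := (Finset.mem_Icc.mp hk).1
    have hRη : (R k)ᵀ * η = -(((-1 : ℂ) ^ k) • (η * R k)) :=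
      eq_neg_of_add_eq_zero_left (hsym k hk1)
    rw [hEη, mul_assoc, hFR k hk1, ← mul_assoc, hRη,
      mul_smul_comm, neg_mul, smul_mul_assoc, mul_assoc, neg_add_cancel]
  calc Sᵀ * (exp (c • μ))ᵀ * η + (exp (c • μ))ᵀ * η * S
      = ∑ k ∈ Finset.Icc 1 N,
        ((R k)ᵀ * ((exp (c • μ))ᵀ * η) + (exp (c • μ))ᵀ * η * R k) := by
        rw [hS, transpose_sum, Finset.sum_mul, Finset.mul_sum, Finset.sum_add_distrib,
          Finset.sum_mul]
        congr 1
        exact Finset.sum_congr rfl fun k _ => by rw [mul_assoc]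
    _ = 0 := by
        rw [Finset.sum_congr rfl hterm]
        simp
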